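/- arXiv:1603.06758 — 2 statements merged into one kernel-verified Lean document; each statement's English description precedes it below -/
import Mathlib

section
/- For every real number x ≥ 1, the partial sum Σ_{n ≤ x} μ(n)/n satisfies |Σ_{n ≤ x} μ(n)/n| ≤ 1. -/
open ArithmeticFunction Finset
open scoped ArithmeticFunction.Moebius

lemma moebius_sum_divisors (n : ℕ) :
    ∑ d ∈ n.divisors, (μ d : ℤ) = if n = 1 then 1 else 0 := by
  have h := congrArg (fun f : ArithmeticFunction ℤ => f n) moebius_mul_coe_zeta
  simp only [coe_mul_zeta_apply] at h
  rw [h, one_apply]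

lemma key_sum (N : ℕ) (hN : 1 ≤ N) :
    ∑ d ∈ Finset.Icc 1 N, (μ d : ℤ) * (N / d : ℕ) = 1 := by
  have h1 : ∑ n ∈ Finset.Icc 1 N, ∑ d ∈ n.divisors, (μ d : ℤ) = 1 := by
    simp_rw [moebius_sum_divisors]
    rw [Finset.sum_ite_eq' (Finset.Icc 1 N) 1 (fun _ => (1 : ℤ))]
    simp [hN]
  have h2 : ∀ n ∈ Finset.Icc 1 N, ∑ d ∈ n.divisors, (μ d : ℤ) =
      ∑ d ∈ Finset.Icc 1 N, if d ∣ n then (μ d : ℤ) else 0 := by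
    intro n hn
    rw [Finset.mem_Icc] at hn
    rw [← Finset.sum_filter]
    congr 1
    ext d
    simp only [Nat.mem_divisors, Finset.mem_filter, Finset.mem_Icc]
    constructor
    · rintro ⟨hd, hn0⟩
      exact ⟨⟨Nat.one_le_iff_ne_zero.mpr (fun h => by simp [h] at hd; omega),
        le_trans (Nat.le_of_dvd (by omega) hd) hn.2⟩, hd⟩
    · rintro ⟨⟨h1', h2'⟩, hd⟩
      exact ⟨hd, by omega⟩
  rw [Finset.sum_congr rfl h2, Finset.sum_comm] at h1
  rw [← h1]
  refine Finset.sum_congr rfl fun d hd => ?_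
  rw [Finset.mem_Icc] at hd
  rw [← Finset.sum_filter]
  rw [Finset.sum_const, nsmul_eq_mul, mul_comm]
  congr 2
  have : Finset.filter (fun n => d ∣ n) (Finset.Icc 1 N) =
      Finset.filter (fun k => k ≠ 0 ∧ d ∣ k) (Finset.range N.succ) := by
    ext k
    simp only [Finset.mem_filter, Finset.mem_Icc, Finset.mem_range, Nat.lt_succ_iff]
    omega
  rw [this, Nat.card_multiples']

theorem abs_sum_moebius_div_le_one (x : ℝ) (hx : 1 ≤ x) :
    |∑ n ∈ Finset.Icc 1 ⌊x⌋₊, (μ n : ℝ) / n| ≤ 1 := by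
  set N := ⌊x⌋₊ with hNdef
  have hN1 : 1 ≤ N := Nat.le_floor (by exact_mod_cast hx)
  have hNx : (N : ℝ) ≤ x := Nat.floor_le (by linarith)
  have hxN : x < N + 1 := Nat.lt_floor_add_one x
  rcases eq_or_lt_of_le hN1 with hN | hN2
  · -- N = 1
    rw [← hN]
    simp
  -- N ≥ 2
  set S : ℝ := ∑ n ∈ Finset.Icc 1 N, (μ n : ℝ) / n with hS
  -- frac part bounds
  have hfrac : ∀ n ∈ Finset.Icc 1 N,
      0 ≤ x / n - ((N / n : ℕ) : ℝ) ∧ x / n - ((N / n : ℕ) : ℝ) < 1 := by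
    intro n hn
    rw [Finset.mem_Icc] at hn
    have hn0 : (0 : ℝ) < n := by exact_mod_cast hn.1
    constructor
    · have : ((N / n : ℕ) : ℝ) * n ≤ x := by
        calc ((N / n : ℕ) : ℝ) * n = ((N / n * n : ℕ) : ℝ) := by push_cast; ring
        _ ≤ (N : ℝ) := by exact_mod_cast Nat.div_mul_le_self N n
        _ ≤ x := hNx
      rw [sub_nonneg, le_div_iff₀ hn0]
      linarith
    · have hNlt : N < N / n * n + n := by
        have h1 := Nat.div_add_mod N n
        have h2 := Nat.mod_lt N (show 0 < n by omega)
        rw [Nat.mul_comm] at h1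
        omega
      have : x < ((N / n : ℕ) : ℝ) * n + n := by
        have : ((N : ℕ) : ℝ) + 1 ≤ ((N / n * n + n : ℕ) : ℝ) := by exact_mod_cast hNlt
        push_cast at this ⊢
        linarith
      rw [sub_lt_iff_lt_add, div_lt_iff₀ hn0]
      linarith
  have hkey : x * S = 1 + ∑ n ∈ Finset.Icc 1 N, (μ n : ℝ) * (x / n - ((N / n : ℕ) : ℝ)) := by
    have hmain : (∑ d ∈ Finset.Icc 1 N, (μ d : ℝ) * ((N / d : ℕ) : ℝ)) = 1 := by
      have h := key_sum N hN1
      calc (∑ d ∈ Finset.Icc 1 N, (μ d : ℝ) * ((N / d : ℕ) : ℝ))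
          = ((∑ d ∈ Finset.Icc 1 N, (μ d : ℤ) * ((N / d : ℕ) : ℤ) : ℤ) : ℝ) := by
            push_cast; rfl
        _ = ((1 : ℤ) : ℝ) := by exact_mod_cast congrArg (fun z : ℤ => (z : ℝ)) h
        _ = 1 := by norm_num
    rw [hS, Finset.mul_sum, ← hmain, ← Finset.sum_add_distrib]
    refine Finset.sum_congr rfl fun n hn => ?_
    rw [Finset.mem_Icc] at hn
    have hn0 : (n : ℝ) ≠ 0 := by
      have : (0:ℝ) < n := by exact_mod_cast hn.1
      linarith
    field_simp
    ring
  -- bound the error term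
  have habs_mu : ∀ n : ℕ, |(μ n : ℝ)| ≤ 1 := by
    intro n
    have := abs_moebius_le_one (n := n)
    exact_mod_cast this
  have hE : |∑ n ∈ Finset.Icc 1 N, (μ n : ℝ) * (x / n - ((N / n : ℕ) : ℝ))|
      ≤ ∑ n ∈ Finset.Icc 1 N, (x / n - ((N / n : ℕ) : ℝ)) := by
    refine (Finset.abs_sum_le_sum_abs _ _).trans (Finset.sum_le_sum fun n hn => ?_)
    rw [abs_mul]
    have h0 := (hfrac n hn).1
    calc |(μ n : ℝ)| * |x / n - ((N / n : ℕ) : ℝ)|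
        ≤ 1 * |x / n - ((N / n : ℕ) : ℝ)| := by
          apply mul_le_mul_of_nonneg_right (habs_mu n) (abs_nonneg _)
      _ = x / n - ((N / n : ℕ) : ℝ) := by rw [one_mul, abs_of_nonneg h0]
  have hsplit : ∑ n ∈ Finset.Icc 1 N, (x / n - ((N / n : ℕ) : ℝ))
      = (x - N) + ∑ n ∈ Finset.Icc 2 N, (x / n - ((N / n : ℕ) : ℝ)) := by
    have : Finset.Icc 1 N = insert 1 (Finset.Icc 2 N) := by
      ext k; simp only [Finset.mem_insert, Finset.mem_Icc]; omega
    rw [this, Finset.sum_insert (by simp)]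
    simp
  have htail : ∑ n ∈ Finset.Icc 2 N, (x / n - ((N / n : ℕ) : ℝ)) < (N : ℝ) - 1 := by
    have hne : (Finset.Icc 2 N).Nonempty := ⟨2, by rw [Finset.mem_Icc]; omega⟩
    have := Finset.sum_lt_sum_of_nonempty hne
      (f := fun n => x / n - ((N / n : ℕ) : ℝ)) (g := fun _ => (1 : ℝ))
      (fun n hn => (hfrac n (Finset.mem_Icc.mpr (by
        rw [Finset.mem_Icc] at hn; omega))).2)
    rw [Finset.sum_const, nsmul_eq_mul, mul_one, Nat.card_Icc] at this
    have hcard : ((N + 1 - 2 : ℕ) : ℝ) = (N : ℝ) - 1 := by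
      have : N + 1 - 2 = N - 1 := by omega
      rw [this]
      push_cast [Nat.cast_sub hN1]
      ring
    linarith [this, hcard ▸ this]
  have hxS : |x * S| < x := by
    rw [hkey]
    calc |1 + ∑ n ∈ Finset.Icc 1 N, (μ n : ℝ) * (x / n - ((N / n : ℕ) : ℝ))|
        ≤ 1 + |∑ n ∈ Finset.Icc 1 N, (μ n : ℝ) * (x / n - ((N / n : ℕ) : ℝ))| := by
          calc _ ≤ |(1:ℝ)| + _ := abs_add_le _ _
            _ = _ := by rw [abs_one]
      _ ≤ 1 + ∑ n ∈ Finset.Icc 1 N, (x / n - ((N / n : ℕ) : ℝ)) := by linarith [hE]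
      _ = 1 + (x - N) + ∑ n ∈ Finset.Icc 2 N, (x / n - ((N / n : ℕ) : ℝ)) := by
          rw [hsplit]; ring
      _ < 1 + (x - N) + ((N : ℝ) - 1) := by linarith [htail]
      _ = x := by ring
  have hx0 : 0 < x := by linarith
  have : |S| < 1 := by
    rw [abs_mul, abs_of_pos hx0] at hxS
    nlinarith [abs_nonneg S]
  linarith
end

section
/- For every real number x ≥ 1, the partial sum of the Liouville function satisfies |Σ_{n ≤ x} λ(n)/n| < 2. -/
open ArithmeticFunction

/-- The Liouville function `λ(n) = (-1)^Ω(n)`. -/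
def liouville (n : ℕ) : ℤ := (-1) ^ (cardFactors n)

/-- The Liouville function as an `ArithmeticFunction`. -/
def lamAF : ArithmeticFunction ℤ := ⟨fun n => if n = 0 then 0 else _root_.liouville n, by simp⟩

lemma lamAF_apply {n : ℕ} (hn : n ≠ 0) : lamAF n = _root_.liouville n := if_neg hn

lemma lamAF_mult : lamAF.IsMultiplicative := by
  constructor
  · simp [lamAF, _root_.liouville]
  · intro m n hmn
    rcases eq_or_ne m 0 with rfl | hm
    · simp [lamAF, Nat.coprime_zero_left _ |>.mp hmn, _root_.liouville]
    rcases eq_or_ne n 0 with rfl | hn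
    · simp [lamAF, Nat.coprime_zero_right _ |>.mp hmn, _root_.liouville]
    rw [lamAF_apply (Nat.mul_ne_zero hm hn), lamAF_apply hm, lamAF_apply hn]
    unfold _root_.liouville
    rw [cardFactors_mul hm hn, pow_add]

lemma isSquare_iff_even_factorization {n : ℕ} (hn : n ≠ 0) :
    IsSquare n ↔ ∀ p, Even (n.factorization p) := by
  constructor
  · rintro ⟨m, rfl⟩ p
    rw [← sq, Nat.factorization_pow]
    simp [Nat.even_mul]
  · intro h
    refine ⟨n.factorization.prod fun p k => p ^ (k / 2), ?_⟩
    have h2 : (n.factorization.prod fun p k => p ^ (k / 2) * p ^ (k / 2)) =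
        n.factorization.prod (fun p k => p ^ (k / 2)) *
        n.factorization.prod (fun p k => p ^ (k / 2)) := Finsupp.prod_mul
    rw [← h2]
    conv_lhs => rw [← Nat.factorization_prod_pow_eq_self hn]
    refine Finsupp.prod_congr fun p hp => ?_
    rw [← pow_add]
    obtain ⟨k, hk⟩ := h p
    simp only [hk]
    congr 1
    omega

lemma sum_divisors_liouville {n : ℕ} (hn : n ≠ 0) :
    ∑ d ∈ n.divisors, _root_.liouville d = if IsSquare n then 1 else 0 := by
  have hz : (↑zeta * lamAF) n = ∑ d ∈ n.divisors, _root_.liouville d := by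
    rw [coe_zeta_mul_apply]
    exact Finset.sum_congr rfl fun d hd => lamAF_apply (Nat.pos_of_mem_divisors hd).ne'
  rw [← hz, (isMultiplicative_zeta.natCast.mul lamAF_mult).multiplicative_factorization _ hn]
  have hpp : ∀ p k : ℕ, p.Prime → (↑zeta * lamAF) (p ^ k) = if Even k then 1 else 0 := by
    intro p k hp
    rw [coe_zeta_mul_apply, Nat.sum_divisors_prime_pow hp]
    have : ∀ i ∈ Finset.range (k + 1), lamAF (p ^ i) = (-1 : ℤ) ^ i := by
      intro i _
      rw [lamAF_apply (pow_ne_zero _ hp.pos.ne'), _root_.liouville, cardFactors_apply_prime_pow hp]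
    rw [Finset.sum_congr rfl this, neg_one_geom_sum]
    rcases Nat.even_or_odd k with h | h
    · rw [if_neg (by simp [Nat.even_add_one, h]), if_pos h]
    · rw [if_pos (by simp [Nat.even_add_one, Nat.not_even_iff_odd.mpr h]),
        if_neg (Nat.not_even_iff_odd.mpr h)]
  have hprod : (n.factorization.prod fun p k => (↑zeta * lamAF) (p ^ k)) =
      n.factorization.prod fun _ k => if Even k then (1 : ℤ) else 0 :=
    Finsupp.prod_congr fun p hp => hpp p _ (Nat.prime_of_mem_primeFactors
      (by rwa [← Nat.support_factorization]))
  rw [hprod]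
  by_cases hsq : IsSquare n
  · rw [if_pos hsq]
    exact Finset.prod_eq_one fun p hp =>
      if_pos ((isSquare_iff_even_factorization hn).mp hsq p)
  · rw [if_neg hsq]
    obtain ⟨p, hodd⟩ := not_forall.mp fun h => hsq ((isSquare_iff_even_factorization hn).mpr h)
    have hps : p ∈ n.factorization.support := by
      rw [Finsupp.mem_support_iff]
      intro h0
      exact hodd (by simp [h0])
    exact Finset.prod_eq_zero hps (if_neg hodd)

open Finset in
lemma card_squares (N : ℕ) : #{n ∈ Finset.Icc 1 N | IsSquare n} = Nat.sqrt N := by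
  have h : #(Finset.Icc 1 (Nat.sqrt N)) = Nat.sqrt N := by simp
  rw [← h]
  apply Finset.card_nbij' (fun n => Nat.sqrt n) (fun k => k * k)
  · intro n hn
    simp only [mem_coe, mem_filter, mem_Icc] at hn
    obtain ⟨⟨h1, h2⟩, m, rfl⟩ := hn
    simp only [mem_coe, mem_Icc, Nat.sqrt_eq]
    exact ⟨Nat.one_le_iff_ne_zero.mpr (by rintro rfl; simp at h1), Nat.le_sqrt.mpr h2⟩
  · intro k hk
    simp only [mem_coe, mem_Icc] at hk
    simp only [mem_coe, mem_filter, mem_Icc]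
    exact ⟨⟨Nat.one_le_iff_ne_zero.mpr (Nat.mul_ne_zero (by omega) (by omega)),
      Nat.le_sqrt.mp hk.2⟩, ⟨k, rfl⟩⟩
  · intro n hn
    simp only [mem_coe, mem_filter] at hn
    obtain ⟨-, m, rfl⟩ := hn
    simp [Nat.sqrt_eq]
  · intro k hk
    simp [Nat.sqrt_eq]

open Finset in
lemma sum_liouville_mul_div (N : ℕ) :
    ∑ d ∈ Finset.Icc 1 N, _root_.liouville d * ((N / d : ℕ) : ℤ) = (Nat.sqrt N : ℤ) := by
  have hIoc : Finset.Icc 1 N = Finset.Ioc 0 N := by rw [← Finset.Icc_add_one_left_eq_Ioc]; rfl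
  have hcard : ∀ d : ℕ, #{n ∈ Finset.Icc 1 N | d ∣ n} = N / d := by
    intro d
    rw [hIoc]
    exact Nat.Ioc_filter_dvd_card_eq_div N d
  calc ∑ d ∈ Icc 1 N, _root_.liouville d * ((N / d : ℕ) : ℤ)
      = ∑ d ∈ Icc 1 N, ∑ _n ∈ {n ∈ Icc 1 N | d ∣ n}, _root_.liouville d := by
        refine Finset.sum_congr rfl fun d hd => ?_
        rw [Finset.sum_const, hcard d, nsmul_eq_mul, mul_comm]
    _ = ∑ d ∈ Icc 1 N, ∑ n ∈ Icc 1 N, if d ∣ n then _root_.liouville d else 0 := by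
        exact Finset.sum_congr rfl fun d _ => Finset.sum_filter _ _
    _ = ∑ n ∈ Icc 1 N, ∑ d ∈ Icc 1 N, if d ∣ n then _root_.liouville d else 0 := Finset.sum_comm
    _ = ∑ n ∈ Icc 1 N, ∑ d ∈ n.divisors, _root_.liouville d := by
        refine Finset.sum_congr rfl fun n hn => ?_
        simp only [mem_Icc] at hn
        rw [← Finset.sum_filter]
        refine Finset.sum_congr ?_ fun _ _ => rfl
        ext d
        simp only [Finset.mem_filter, Finset.mem_Icc, Nat.mem_divisors]
        constructor
        · rintro ⟨⟨h1, h2⟩, hd⟩; exact ⟨hd, by omega⟩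
        · rintro ⟨hd, -⟩
          exact ⟨⟨Nat.pos_of_dvd_of_pos hd (by omega),
            le_trans (Nat.le_of_dvd (by omega) hd) hn.2⟩, hd⟩
    _ = ∑ n ∈ Icc 1 N, if IsSquare n then 1 else 0 := by
        refine Finset.sum_congr rfl fun n hn => ?_
        simp only [mem_Icc] at hn
        exact sum_divisors_liouville (by omega)
    _ = (#{n ∈ Icc 1 N | IsSquare n} : ℤ) := by
        rw [← Finset.sum_filter, Finset.sum_const, nsmul_eq_mul, mul_one]
    _ = (Nat.sqrt N : ℤ) := by rw [card_squares]

lemma abs_liouville_real (n : ℕ) : |(_root_.liouville n : ℝ)| = 1 := by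
  rw [_root_.liouville]
  push_cast
  rw [abs_pow, abs_neg, abs_one, one_pow]

theorem abs_sum_liouville_div_lt_two (x : ℝ) (hx : 1 ≤ x) :
    |∑ n ∈ Finset.Icc 1 ⌊x⌋₊, (_root_.liouville n : ℝ) / n| < 2 := by
  set N := ⌊x⌋₊ with hNdef
  have hx0 : (0 : ℝ) < x := lt_of_lt_of_le one_pos hx
  have hN1 : 1 ≤ N := Nat.le_floor (by exact_mod_cast hx)
  have hNx : (N : ℝ) ≤ x := Nat.floor_le hx0.le
  set S := ∑ n ∈ Finset.Icc 1 N, (_root_.liouville n : ℝ) / n with hSdef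
  set r : ℕ → ℝ := fun n => x / n - ((N / n : ℕ) : ℝ) with hrdef
  have hfloor : ∀ n : ℕ, ((N / n : ℕ) : ℝ) = (⌊x / n⌋₊ : ℝ) := by
    intro n; rw [Nat.floor_div_natCast]
  have hr0 : ∀ n ∈ Finset.Icc 1 N, 0 ≤ r n := by
    intro n hn
    simp only [hrdef, sub_nonneg, hfloor n]
    exact Nat.floor_le (by positivity)
  have hr1 : ∀ n ∈ Finset.Icc 1 N, r n < 1 := by
    intro n hn
    simp only [hrdef, sub_lt_iff_lt_add, hfloor n]
    have := Nat.lt_floor_add_one (x / n)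
    linarith
  have hkey : ∑ n ∈ Finset.Icc 1 N, (_root_.liouville n : ℝ) * ((N / n : ℕ) : ℝ)
      = (Nat.sqrt N : ℝ) := by
    have h := sum_liouville_mul_div N
    have h2 : ((∑ d ∈ Finset.Icc 1 N, _root_.liouville d * ((N / d : ℕ) : ℤ) : ℤ) : ℝ)
        = ((Nat.sqrt N : ℤ) : ℝ) := by rw [h]
    push_cast at h2
    exact h2
  have hmain : x * S = (Nat.sqrt N : ℝ) + ∑ n ∈ Finset.Icc 1 N, (_root_.liouville n : ℝ) * r n := by
    rw [hSdef, Finset.mul_sum, ← hkey, ← Finset.sum_add_distrib]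
    refine Finset.sum_congr rfl fun n hn => ?_
    simp only [hrdef]
    ring
  have habs : |x * S| ≤ (Nat.sqrt N : ℝ) + ∑ n ∈ Finset.Icc 1 N, r n := by
    rw [hmain]
    refine (abs_add_le _ _).trans ?_
    refine add_le_add (le_of_eq (abs_of_nonneg (by positivity))) ?_
    refine (Finset.abs_sum_le_sum_abs _ _).trans ?_
    refine Finset.sum_le_sum fun n hn => ?_
    rw [abs_mul, abs_liouville_real, one_mul, abs_of_nonneg (hr0 n hn)]
  have hsum : ∑ n ∈ Finset.Icc 1 N, r n < N := by
    calc ∑ n ∈ Finset.Icc 1 N, r n < ∑ n ∈ Finset.Icc 1 N, (1 : ℝ) :=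
          Finset.sum_lt_sum_of_nonempty (by simp [hN1]) hr1
      _ = N := by simp
  have hsqrt : (Nat.sqrt N : ℝ) ≤ x :=
    le_trans (by exact_mod_cast Nat.sqrt_le_self N) hNx
  have h2x : |x * S| < 2 * x := by
    calc |x * S| ≤ (Nat.sqrt N : ℝ) + ∑ n ∈ Finset.Icc 1 N, r n := habs
      _ < x + x := by linarith
      _ = 2 * x := by ring
  rw [abs_mul, abs_of_pos hx0] at h2x
  exact (mul_lt_mul_iff_right₀ hx0).mp (by linarith : x * |S| < x * 2)
end
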